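/- Let B ⊆ ℝⁿ be nonempty, closed and convex, μ > 0, ζ ∈ (0,1], x ∈ ℝⁿ, yᵏ ∈ B, y_reg = (1/(1+μ))·yᵏ + (μ/(1+μ))·x, and Q(y) = (1/(2μ))‖y − yᵏ‖² + (1/2)‖x − y‖² − (1/2)‖x − yᵏ‖². Let ŷ ∈ B satisfy Q(ŷ) ≤ Q(b) for all b ∈ B, and let y ∈ B satisfy Q(y) ≤ ζ·Q(ŷ). Then ‖y − ŷ‖ ≤ sqrt((2μ/(1+μ))·(Q(y) − Q(ŷ))) ≤ sqrt(−(2μ(1−ζ))/((1+μ)ζ)·Q(y)). -/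

import Mathlib

set_option maxHeartbeats 1000000 in
theorem stmt_2 {n : ℕ} (B : Set (EuclideanSpace ℝ (Fin n)))
    (hBne : B.Nonempty) (hBclosed : IsClosed B) (hBconv : Convex ℝ B)
    (μ ζ : ℝ) (hμ : 0 < μ) (hζ : ζ ∈ Set.Ioc (0 : ℝ) 1)
    (x : EuclideanSpace ℝ (Fin n)) (yk : EuclideanSpace ℝ (Fin n)) (hyk : yk ∈ B)
    (yreg : EuclideanSpace ℝ (Fin n))
    (hyreg : yreg = (1 / (1 + μ)) • yk + (μ / (1 + μ)) • x)
    (Q : EuclideanSpace ℝ (Fin n) → ℝ)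
    (hQ : ∀ y, Q y =
      (1 / (2 * μ)) * ‖y - yk‖ ^ 2 + (1 / 2) * ‖x - y‖ ^ 2 - (1 / 2) * ‖x - yk‖ ^ 2)
    (yhat : EuclideanSpace ℝ (Fin n)) (hyhatB : yhat ∈ B)
    (hyhatmin : ∀ b ∈ B, Q yhat ≤ Q b)
    (y : EuclideanSpace ℝ (Fin n)) (hyB : y ∈ B)
    (hy : Q y ≤ ζ * Q yhat) :
    ‖y - yhat‖ ≤ Real.sqrt ((2 * μ / (1 + μ)) * (Q y - Q yhat)) ∧
      Real.sqrt ((2 * μ / (1 + μ)) * (Q y - Q yhat)) ≤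
        Real.sqrt (-(2 * μ * (1 - ζ)) / ((1 + μ) * ζ) * Q y) := by
  obtain ⟨hζ0, hζ1⟩ := hζ
  have hμ1 : (0:ℝ) < 1 + μ := by linarith
  set d : EuclideanSpace ℝ (Fin n) := y - yhat with hd
  set c : ℝ := 1 / (2 * μ) + 1 / 2 with hc
  have hcpos : 0 < c := by positivity
  set L : ℝ := (1 / μ) * inner ℝ (yhat - yk) d - inner ℝ (x - yhat) d with hL
  -- key quadratic expansion
  have key : ∀ t : ℝ, Q (yhat + t • d) = Q yhat + t * L + t ^ 2 * (c * ‖d‖ ^ 2) := by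
    intro t
    have e1 : yhat + t • d - yk = (yhat - yk) + t • d := by module
    have e2 : x - (yhat + t • d) = (x - yhat) - t • d := by module
    have n1 : ‖(yhat - yk) + t • d‖ ^ 2
        = ‖yhat - yk‖ ^ 2 + 2 * (t * inner ℝ (yhat - yk) d) + t ^ 2 * ‖d‖ ^ 2 := by
      rw [norm_add_sq_real, real_inner_smul_right, norm_smul, Real.norm_eq_abs,
        mul_pow, sq_abs]
    have n2 : ‖(x - yhat) - t • d‖ ^ 2
        = ‖x - yhat‖ ^ 2 - 2 * (t * inner ℝ (x - yhat) d) + t ^ 2 * ‖d‖ ^ 2 := by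
      rw [norm_sub_sq_real, real_inner_smul_right, norm_smul, Real.norm_eq_abs,
        mul_pow, sq_abs]
    rw [hQ, hQ, e1, e2, n1, n2, hL, hc]
    field_simp
    ring
  -- membership of segment points
  have hmem : ∀ t : ℝ, 0 < t → t ≤ 1 → yhat + t • d ∈ B := by
    intro t ht0 ht1
    have h := hBconv hyhatB hyB (by linarith : (0:ℝ) ≤ 1 - t) (le_of_lt ht0)
      (by ring)
    have : (1 - t) • yhat + t • y = yhat + t • d := by rw [hd]; module
    rwa [this] at h
  have hmin : ∀ t : ℝ, 0 < t → t ≤ 1 → 0 ≤ t * L + t ^ 2 * (c * ‖d‖ ^ 2) := by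
    intro t ht0 ht1
    have := hyhatmin _ (hmem t ht0 ht1)
    rw [key t] at this
    linarith
  have hd2 : (0:ℝ) ≤ ‖d‖ ^ 2 := by positivity
  -- L ≥ 0
  have hL0 : 0 ≤ L := by
    by_contra hneg
    push_neg at hneg
    rcases eq_or_lt_of_le hd2 with h0 | hpos
    · have := hmin 1 one_pos le_rfl
      rw [← h0] at this
      nlinarith
    · set t := min 1 (-L / (2 * (c * ‖d‖ ^ 2))) with htdef
      have hcd : 0 < c * ‖d‖ ^ 2 := by positivity
      have ht0 : 0 < t := lt_min one_pos (div_pos (by linarith) (by positivity))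
      have ht1 : t ≤ 1 := min_le_left _ _
      have ht2 : t ≤ -L / (2 * (c * ‖d‖ ^ 2)) := min_le_right _ _
      have h := hmin t ht0 ht1
      have ht3 : t * (c * ‖d‖ ^ 2) ≤ -L / 2 := by
        have h4 := mul_le_mul_of_nonneg_right ht2 hcd.le
        have h5 : -L / (2 * (c * ‖d‖ ^ 2)) * (c * ‖d‖ ^ 2) = -L / 2 := by
          rw [div_mul_eq_mul_div, mul_div_mul_right _ _ hcd.ne']
        linarith
      have h9 : 0 ≤ L + t * (c * ‖d‖ ^ 2) :=
        le_of_mul_le_mul_left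
          (by nlinarith [h] : t * 0 ≤ t * (L + t * (c * ‖d‖ ^ 2))) ht0
      clear_value t L c d
      linarith
  have hQdiff : c * ‖d‖ ^ 2 ≤ Q y - Q yhat := by
    have := key 1
    have e : yhat + (1:ℝ) • d = y := by rw [hd]; module
    rw [e] at this
    nlinarith
  -- Q yhat ≤ 0 since Q yk = 0
  have hQyk : Q yk = 0 := by rw [hQ, sub_self, norm_zero]; ring
  have hQyhat : Q yhat ≤ 0 := by
    have := hyhatmin yk hyk; linarith
  have hQy : Q y ≤ 0 := by nlinarith
  have hcinv : (2 * μ / (1 + μ)) * c = 1 := by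
    rw [hc]; field_simp
  have hA : ‖d‖ ^ 2 ≤ (2 * μ / (1 + μ)) * (Q y - Q yhat) := by
    have hpos : 0 < 2 * μ / (1 + μ) := by positivity
    have e : 2 * μ / (1 + μ) * (c * ‖d‖ ^ 2) = ‖d‖ ^ 2 := by
      rw [hc]; field_simp
    linarith [mul_le_mul_of_nonneg_left hQdiff hpos.le]
  constructor
  · exact (Real.le_sqrt (norm_nonneg d) (le_trans hd2 hA)).mpr hA
  · apply Real.sqrt_le_sqrt
    have hid : -(2 * μ * (1 - ζ)) / ((1 + μ) * ζ) * Q y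
        - (2 * μ / (1 + μ)) * (Q y - Q yhat)
        = (2 * μ / ((1 + μ) * ζ)) * (ζ * Q yhat - Q y) := by
      field_simp
      ring
    have hfac : 0 ≤ (2 * μ / ((1 + μ) * ζ)) * (ζ * Q yhat - Q y) := by
      have h1 : 0 ≤ ζ * Q yhat - Q y := by linarith
      positivity
    linarith
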